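/- Let a, b be real numbers with b ≠ 0, and let lambda, Omega : R -> R be differentiable functions satisfying lambda'(t) = a (1 - Omega(t)) lambda(t)^2 and Omega'(t) = b (1 - Omega(t)) lambda(t) for all t. Then the function t -> lambda(t) * exp(-(a/b) * Omega(t)) is constant; in particular lambda(t) = lambda(0) * exp((a/b)(Omega(t) - Omega(0))) for all t. -/

import Mathlib

theorem stmt_8 (a b : ℝ) (hb : b ≠ 0) (lam Omega : ℝ → ℝ)
    (hlam : Differentiable ℝ lam) (hOmega : Differentiable ℝ Omega)
    (hl : ∀ t, deriv lam t = a * (1 - Omega t) * (lam t)^2)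
    (hO : ∀ t, deriv Omega t = b * (1 - Omega t) * lam t) :
    (∀ t, lam t * Real.exp (-(a / b) * Omega t)
        = lam 0 * Real.exp (-(a / b) * Omega 0))
    ∧ ∀ t, lam t = lam 0 * Real.exp ((a / b) * (Omega t - Omega 0)) := by
  set f : ℝ → ℝ := fun t => lam t * Real.exp (-(a / b) * Omega t) with hf
  have hg : Differentiable ℝ fun t => Real.exp (-(a / b) * Omega t) :=
    (Real.differentiable_exp.comp ((differentiable_const _).mul hOmega))
  have hdf : ∀ t, deriv f t = 0 := by
    intro t
    have h1 : HasDerivAt lam (a * (1 - Omega t) * (lam t)^2) t := by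
      rw [← hl t]; exact (hlam t).hasDerivAt
    have h2 : HasDerivAt Omega (b * (1 - Omega t) * lam t) t := by
      rw [← hO t]; exact (hOmega t).hasDerivAt
    have h3 : HasDerivAt (fun t => -(a / b) * Omega t)
        (-(a / b) * (b * (1 - Omega t) * lam t)) t := h2.const_mul _
    have h4 : HasDerivAt (fun t => Real.exp (-(a / b) * Omega t))
        (Real.exp (-(a / b) * Omega t) * (-(a / b) * (b * (1 - Omega t) * lam t))) t :=
      h3.exp
    have h5 := h1.mul h4
    have := h5.deriv
    rw [show f = (lam * fun t => Real.exp (-(a / b) * Omega t)) from rfl, this]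
    field_simp
    ring
  have hconst : ∀ t, f t = f 0 := by
    intro t
    exact is_const_of_deriv_eq_zero (hlam.mul hg) hdf t 0
  refine ⟨hconst, fun t => ?_⟩
  have h := hconst t
  simp only [hf] at h
  have := congrArg (fun x => x * Real.exp ((a / b) * Omega t)) h
  simp only [mul_assoc, ← Real.exp_add] at this
  have e1 : -(a / b) * Omega t + a / b * Omega t = 0 := by ring
  have e2 : -(a / b) * Omega 0 + a / b * Omega t = (a / b) * (Omega t - Omega 0) := by ring
  rw [e1, e2, Real.exp_zero, mul_one] at this
  exact this
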